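/- There is no Lebesgue measurable set S ⊆ ℝ² and constants 0 < m ≤ M < ∞ such that for almost every point p ∈ ℝ², for almost every θ ∈ (0,π), the one-dimensional measure of S intersected with the line through p at angle θ lies in [m, M]. -/

import Mathlib

open MeasureTheory Real Set

noncomputable def ker (w : ℂ) : ENNReal := (ENNReal.ofReal ‖w‖)⁻¹

theorem my_lintegral_polar (f : ℝ × ℝ → ENNReal) :
    ∫⁻ p in polarCoord.target, ENNReal.ofReal p.1 * f (polarCoord.symm p) = ∫⁻ p, f p := by
  set B : ℝ × ℝ → ℝ × ℝ →L[ℝ] ℝ × ℝ := fun p =>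
    LinearMap.toContinuousLinearMap (Matrix.toLin (Module.Basis.finTwoProd ℝ) (Module.Basis.finTwoProd ℝ)
      !![Real.cos p.2, -p.1 * Real.sin p.2; Real.sin p.2, p.1 * Real.cos p.2])
  have B_det : ∀ p, (B p).det = p.1 := by
    intro p
    conv_rhs => rw [← one_mul p.1, ← Real.cos_sq_add_sin_sq p.2]
    simp only [B, neg_mul, LinearMap.det_toContinuousLinearMap, LinearMap.det_toLin,
      Matrix.det_fin_two_of, sub_neg_eq_add]
    ring
  symm
  calc
    ∫⁻ p, f p = ∫⁻ p in polarCoord.source, f p := by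
      rw [← setLIntegral_univ]
      exact (setLIntegral_congr polarCoord_source_ae_eq_univ.symm)
    _ = ∫⁻ p in polarCoord.symm '' polarCoord.target, f p := by
      rw [OpenPartialHomeomorph.symm_image_target_eq_source]
    _ = ∫⁻ p in polarCoord.target, ENNReal.ofReal |(B p).det| * f (polarCoord.symm p) := by
      apply lintegral_image_eq_lintegral_abs_det_fderiv_mul volume
        polarCoord.open_target.measurableSet
        (fun p _ => (hasFDerivAt_polarCoord_symm p).hasFDerivWithinAt)
        polarCoord.symm.injOn
    _ = ∫⁻ p in polarCoord.target, ENNReal.ofReal p.1 * f (polarCoord.symm p) := by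
      refine setLIntegral_congr_fun polarCoord.open_target.measurableSet
        (fun p hp => ?_)
      rw [B_det, abs_of_pos hp.1]

theorem my_symm_eq (p : ℝ × ℝ) :
    Complex.measurableEquivRealProd.symm (polarCoord.symm p) = Complex.polarCoord.symm p := by
  rw [Complex.polarCoord_symm_apply, polarCoord_symm_apply,
    Complex.measurableEquivRealProd_symm_apply]
  apply Complex.ext <;> simp [← Complex.ofReal_cos, ← Complex.ofReal_sin, mul_comm]

theorem my_clintegral_polar (f : ℂ → ENNReal) :
    ∫⁻ p in polarCoord.target, ENNReal.ofReal p.1 * f (Complex.polarCoord.symm p)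
      = ∫⁻ z, f z := by
  rw [← (Complex.volume_preserving_equiv_real_prod.symm _).lintegral_comp_emb
    Complex.measurableEquivRealProd.symm.measurableEmbedding f,
    ← my_lintegral_polar (fun p => f (Complex.measurableEquivRealProd.symm p))]
  exact setLIntegral_congr_fun polarCoord.open_target.measurableSet
    (fun p _ => by rw [my_symm_eq])

theorem my_polar_symm_exp (p : ℝ × ℝ) :
    Complex.polarCoord.symm p = (p.1 : ℂ) * Complex.exp ((p.2 : ℂ) * Complex.I) := by
  rw [Complex.polarCoord_symm_apply, Complex.exp_mul_I, Complex.ofReal_cos, Complex.ofReal_sin]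

theorem my_key (S' : Set ℂ) (hS' : MeasurableSet S') (z : ℂ) :
    ∫⁻ w in S', ker (w - z) =
      ∫⁻ θ in Ioo 0 π,
        volume {r : ℝ | z + (r : ℂ) * Complex.exp ((θ : ℂ) * Complex.I) ∈ S'} := by
  have hφ : ∀ θ : ℝ, Measurable fun r : ℝ => z + (r : ℂ) * Complex.exp ((θ:ℂ) * Complex.I) := by
    intro θ
    exact (Complex.measurable_ofReal.mul_const _).const_add z
  set A : ℝ → Set ℝ := fun θ => {r : ℝ | z + (r:ℂ) * Complex.exp ((θ:ℂ) * Complex.I) ∈ S'}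
    with hA_def
  have hA : ∀ θ, MeasurableSet (A θ) := fun θ => (hφ θ) hS'
  set G : ℝ × ℝ → ENNReal :=
    fun p => S'.indicator 1 (z + (p.1 : ℂ) * Complex.exp ((p.2 : ℂ) * Complex.I)) with hG_def
  have hGm : Measurable G := by
    have : Measurable fun p : ℝ × ℝ => z + (p.1 : ℂ) * Complex.exp ((p.2:ℂ) * Complex.I) := by
      apply Measurable.const_add
      exact (Complex.measurable_ofReal.comp measurable_fst).mul
        ((Complex.measurable_ofReal.comp measurable_snd).mul_const _).cexp
    exact (measurable_one.indicator hS').comp this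
  have hGA : ∀ p : ℝ × ℝ, G p = (A p.2).indicator 1 p.1 := by
    intro p
    show S'.indicator 1 (z + (p.1:ℂ) * Complex.exp ((p.2:ℂ) * Complex.I))
      = (A p.2).indicator 1 p.1
    by_cases h : z + (p.1:ℂ) * Complex.exp ((p.2:ℂ) * Complex.I) ∈ S'
    · rw [Set.indicator_of_mem h, Set.indicator_of_mem (by exact h)]; rfl
    · rw [Set.indicator_of_notMem h, Set.indicator_of_notMem (by exact h)]
  -- step 1 : translate
  have step1 : ∫⁻ w in S', ker (w - z)
      = ∫⁻ v, ((fun v : ℂ => z + v) ⁻¹' S').indicator ker v := by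
    rw [← lintegral_indicator hS', ← lintegral_add_left_eq_self
      (fun w => S'.indicator (fun w => ker (w - z)) w) z]
    refine lintegral_congr fun v => ?_
    by_cases h : z + v ∈ S'
    · rw [Set.indicator_of_mem h, Set.indicator_of_mem (by exact h), add_sub_cancel_left]
    · rw [Set.indicator_of_notMem h, Set.indicator_of_notMem (by exact h)]
  -- step 2 : polar
  have step2 : ∫⁻ v, ((fun v : ℂ => z + v) ⁻¹' S').indicator ker v
      = ∫⁻ p in polarCoord.target, G p := by
    rw [← my_clintegral_polar]
    refine setLIntegral_congr_fun polarCoord.open_target.measurableSet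
      (fun p hp => ?_)
    have hp1 : 0 < p.1 := hp.1
    have hn : ker (Complex.polarCoord.symm p) = (ENNReal.ofReal p.1)⁻¹ := by
      unfold ker
      rw [Complex.norm_polarCoord_symm, abs_of_pos hp1]
    show ENNReal.ofReal p.1 * ((fun v : ℂ => z + v) ⁻¹' S').indicator ker (Complex.polarCoord.symm p)
      = S'.indicator 1 (z + (p.1:ℂ) * Complex.exp ((p.2:ℂ) * Complex.I))
    rw [← my_polar_symm_exp p]
    by_cases h : z + Complex.polarCoord.symm p ∈ S'
    · rw [Set.indicator_of_mem (show Complex.polarCoord.symm p ∈ (fun v : ℂ => z + v) ⁻¹' S' from h),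
        hn, Set.indicator_of_mem h, Pi.one_apply,
        ENNReal.mul_inv_cancel (by positivity) ENNReal.ofReal_ne_top]
    · rw [Set.indicator_of_notMem (show Complex.polarCoord.symm p ∉ (fun v : ℂ => z + v) ⁻¹' S' from h),
        Set.indicator_of_notMem h, mul_zero]
  -- step 3 : Tonelli
  have step3 : ∫⁻ p in polarCoord.target, G p
      = ∫⁻ θ in Ioo (-π) π, ∫⁻ r in Ioi (0:ℝ), G (r, θ) := by
    rw [polarCoord_target, Measure.volume_eq_prod, ← Measure.prod_restrict,
      lintegral_prod _ (hGm.aemeasurable)]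
    exact lintegral_lintegral_swap (hGm.aemeasurable)
  set Fpos : ℝ → ENNReal := fun θ => ∫⁻ r in Ioi (0:ℝ), G (r, θ) with hFpos_def
  set Fneg : ℝ → ENNReal := fun θ => ∫⁻ r in Iio (0:ℝ), G (r, θ) with hFneg_def
  have hFposm : Measurable Fpos :=
    Measurable.lintegral_prod_right' (f := fun q : ℝ × ℝ => G (q.2, q.1))
      (hGm.comp measurable_swap)
  have hFnegm : Measurable Fneg :=
    Measurable.lintegral_prod_right' (f := fun q : ℝ × ℝ => G (q.2, q.1))
      (hGm.comp measurable_swap)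
  have hpi : 0 < π := Real.pi_pos
  have hdisj : Disjoint (Ioo (-π) (0:ℝ)) (Ioo 0 π) :=
    Set.disjoint_left.2 fun x hx hx' => absurd hx.2 (not_lt.2 hx'.1.le)
  have hsub : Ioo (-π) 0 ∪ Ioo 0 π ⊆ Ioo (-π) π := by
    apply union_subset <;> apply Ioo_subset_Ioo <;> linarith
  have hsplitset : (Ioo (-π) π : Set ℝ) =ᵐ[volume] ((Ioo (-π) 0 ∪ Ioo 0 π : Set ℝ)) := by
    rw [MeasureTheory.ae_eq_set]
    constructor
    · refine measure_mono_null ?_ (measure_singleton (0:ℝ))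
      intro x hx
      obtain ⟨⟨ha, hb⟩, hc⟩ := hx
      simp only [mem_union, mem_Ioo, not_or, not_and, not_lt] at hc
      have h5 : (0:ℝ) ≤ x := hc.1 ha
      rcases h5.eq_or_lt with h | h
      · exact h.symm
      · exact absurd (hc.2 h) (by linarith)
    · rw [diff_eq_empty.2 hsub]; exact measure_empty
  have step5 : ∫⁻ θ in Ioo (-π) π, Fpos θ
      = (∫⁻ θ in Ioo (-π) 0, Fpos θ) + ∫⁻ θ in Ioo 0 π, Fpos θ := by
    rw [setLIntegral_congr hsplitset, lintegral_union measurableSet_Ioo hdisj]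
  have step6 : ∫⁻ θ in Ioo (-π) 0, Fpos θ = ∫⁻ θ in Ioo 0 π, Fpos (θ - π) := by
    rw [← lintegral_indicator measurableSet_Ioo, ← lintegral_indicator measurableSet_Ioo,
      ← lintegral_add_left_eq_self ((Ioo (-π) (0:ℝ)).indicator Fpos) (-π)]
    refine lintegral_congr fun θ => ?_
    by_cases h : θ ∈ Ioo (0:ℝ) π
    · rw [Set.indicator_of_mem h,
        Set.indicator_of_mem (show -π + θ ∈ Ioo (-π) 0 by
          constructor <;> [skip; skip] <;> [linarith [h.1]; linarith [h.2]]),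
        neg_add_eq_sub]
    · rw [Set.indicator_of_notMem h,
        Set.indicator_of_notMem (show -π + θ ∉ Ioo (-π) 0 from fun hc =>
          h ⟨by linarith [hc.1], by linarith [hc.2]⟩)]
  have hexp : ∀ θ r : ℝ, z + ((r:ℝ):ℂ) * Complex.exp ((↑(θ - π) : ℂ) * Complex.I)
      = z + ((-r : ℝ):ℂ) * Complex.exp ((θ:ℂ) * Complex.I) := by
    intro θ r
    congr 1
    push_cast
    rw [sub_mul, Complex.exp_sub, Complex.exp_pi_mul_I, div_neg, div_one]
    ring
  have step7 : ∀ θ : ℝ, Fpos (θ - π) = Fneg θ := by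
    intro θ
    have h1 : Fpos (θ - π) = ∫⁻ r in Ioi (0:ℝ), (fun s : ℝ => G (s, θ)) (-r) := by
      rw [hFpos_def]
      refine setLIntegral_congr_fun measurableSet_Ioi
        (fun r _ => ?_)
      show G (r, θ - π) = G (-r, θ)
      simp only [hG_def]
      rw [hexp θ r]
    rw [h1, hFneg_def]
    have h2 := (Measure.measurePreserving_neg (volume : Measure ℝ)).setLIntegral_comp_emb
      (MeasurableEquiv.neg ℝ).measurableEmbedding (fun s : ℝ => G (s, θ)) (Ioi 0)
    simpa using h2
  have step8 : ∀ θ : ℝ, Fneg θ + Fpos θ = volume (A θ) := by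
    intro θ
    have hpos : Fpos θ = volume (A θ ∩ Ioi 0) := by
      rw [hFpos_def]
      calc ∫⁻ r in Ioi (0:ℝ), G (r, θ)
          = ∫⁻ r in Ioi (0:ℝ), (A θ).indicator 1 r :=
            setLIntegral_congr_fun measurableSet_Ioi
              (fun r _ => hGA (r, θ))
        _ = volume (A θ ∩ Ioi 0) := by
            rw [lintegral_indicator_one (hA θ), Measure.restrict_apply (hA θ)]
    have hneg : Fneg θ = volume (A θ ∩ Iio 0) := by
      rw [hFneg_def]
      calc ∫⁻ r in Iio (0:ℝ), G (r, θ)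
          = ∫⁻ r in Iio (0:ℝ), (A θ).indicator 1 r :=
            setLIntegral_congr_fun measurableSet_Iio
              (fun r _ => hGA (r, θ))
        _ = volume (A θ ∩ Iio 0) := by
            rw [lintegral_indicator_one (hA θ), Measure.restrict_apply (hA θ)]
    have hAsplit : (A θ : Set ℝ) =ᵐ[volume] ((A θ ∩ Iio 0 ∪ A θ ∩ Ioi 0 : Set ℝ)) := by
      rw [MeasureTheory.ae_eq_set]
      constructor
      · refine measure_mono_null ?_ (measure_singleton (0:ℝ))
        intro x hx
        obtain ⟨ha, hc⟩ := hx
        simp only [mem_union, mem_inter_iff, mem_Iio, mem_Ioi, not_or, not_and, not_lt] at hc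
        exact le_antisymm (hc.2 ha) (hc.1 ha)
      · rw [diff_eq_empty.2 (union_subset inter_subset_left inter_subset_left)]
        exact measure_empty
    have hdisj2 : Disjoint (A θ ∩ Iio 0) (A θ ∩ Ioi 0) := by
      refine Set.disjoint_left.2 fun x hx hx' => ?_
      exact lt_asymm (mem_Iio.1 hx.2) (mem_Ioi.1 hx'.2)
    rw [hneg, hpos, measure_congr hAsplit,
      measure_union hdisj2 ((hA θ).inter measurableSet_Ioi)]
  rw [step1, step2, step3, step5, step6,
    setLIntegral_congr_fun measurableSet_Ioo
      (fun θ (_ : θ ∈ Ioo 0 π) => step7 θ),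
    ← lintegral_add_left hFnegm]
  exact setLIntegral_congr_fun measurableSet_Ioo
    (fun θ _ => step8 θ)

theorem my_ker_ball (x : ℂ) (ρ : ℝ) :
    ∫⁻ w in Metric.ball x ρ, ker (w - x) ≤ ENNReal.ofReal ρ * ENNReal.ofReal (2 * π) := by
  have h1 : ∫⁻ w in Metric.ball x ρ, ker (w - x)
      = ∫⁻ v, (Metric.ball (0:ℂ) ρ).indicator ker v := by
    rw [← lintegral_indicator Metric.isOpen_ball.measurableSet,
      ← lintegral_add_left_eq_self
        (fun w => (Metric.ball x ρ).indicator (fun w => ker (w - x)) w) x]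
    refine lintegral_congr fun v => ?_
    by_cases h : v ∈ Metric.ball (0:ℂ) ρ
    · rw [Set.indicator_of_mem (show x + v ∈ Metric.ball x ρ by
        simpa [Metric.mem_ball, dist_eq_norm] using by
          simpa [Metric.mem_ball, dist_eq_norm] using h),
        Set.indicator_of_mem h, add_sub_cancel_left]
    · rw [Set.indicator_of_notMem (show x + v ∉ Metric.ball x ρ from fun hc => h (by
        simp only [Metric.mem_ball, dist_eq_norm] at hc ⊢
        simpa [add_sub_cancel_left] using hc)),
        Set.indicator_of_notMem h]
  rw [h1, ← my_clintegral_polar]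
  have h2 : ∫⁻ p in polarCoord.target,
      ENNReal.ofReal p.1 * (Metric.ball (0:ℂ) ρ).indicator ker (Complex.polarCoord.symm p)
      = ∫⁻ p in polarCoord.target, ({q : ℝ × ℝ | q.1 < ρ}).indicator 1 p := by
    refine setLIntegral_congr_fun polarCoord.open_target.measurableSet
      (fun p hp => ?_)
    have hp1 : (0:ℝ) < p.1 := hp.1
    have hns : ‖Complex.polarCoord.symm p‖ = p.1 := by
      rw [Complex.norm_polarCoord_symm, abs_of_pos hp1]
    by_cases h : p.1 < ρ
    · rw [Set.indicator_of_mem (show Complex.polarCoord.symm p ∈ Metric.ball (0:ℂ) ρ by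
        rw [Metric.mem_ball, dist_zero_right, hns]; exact h),
        Set.indicator_of_mem (show p ∈ {q : ℝ × ℝ | q.1 < ρ} from h), Pi.one_apply]
      unfold ker
      rw [hns, ENNReal.mul_inv_cancel (by positivity) ENNReal.ofReal_ne_top]
    · rw [Set.indicator_of_notMem (show Complex.polarCoord.symm p ∉ Metric.ball (0:ℂ) ρ by
        rw [Metric.mem_ball, dist_zero_right, hns]; exact h),
        Set.indicator_of_notMem (show p ∉ {q : ℝ × ℝ | q.1 < ρ} from h), mul_zero]
  rw [h2]
  have hms : MeasurableSet {q : ℝ × ℝ | q.1 < ρ} := measurable_fst measurableSet_Iio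
  rw [lintegral_indicator_one hms, Measure.restrict_apply hms]
  have hsub : {q : ℝ × ℝ | q.1 < ρ} ∩ polarCoord.target ⊆ Ioo 0 ρ ×ˢ Ioo (-π) π := by
    rintro ⟨a, b⟩ ⟨h1', h2'⟩
    rw [polarCoord_target] at h2'
    exact ⟨⟨h2'.1, h1'⟩, h2'.2⟩
  refine le_trans (measure_mono hsub) ?_
  rw [Measure.volume_eq_prod, Measure.prod_prod, Real.volume_Ioo, Real.volume_Ioo]
  rw [sub_zero]
  gcongr <;> linarith [Real.pi_pos]

/-- There is no measurable set in the plane meeting almost every line through almost every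
point in a measure lying in `[m, M]` for constants `0 < m ≤ M < ∞`. -/
theorem no_measurable_set_meeting_ae_lines_in_bounded_measure :
    ¬ ∃ (S : Set (ℝ × ℝ)) (m M : ℝ), MeasurableSet S ∧ 0 < m ∧ m ≤ M ∧
      ∀ᵐ p : ℝ × ℝ, ∀ᵐ θ ∂(volume.restrict (Set.Ioo 0 π)),
        volume {r : ℝ | (p.1 + r * Real.cos θ, p.2 + r * Real.sin θ) ∈ S}
          ∈ Set.Icc (ENNReal.ofReal m) (ENNReal.ofReal M) := by
  rintro ⟨S, m, M, hS, hm, hmM, hae⟩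
  have hpi : (0:ℝ) < π := Real.pi_pos
  have hM : (0:ℝ) < M := lt_of_lt_of_le hm hmM
  set S' : Set ℂ := Complex.measurableEquivRealProd ⁻¹' S with hS'_def
  have hS' : MeasurableSet S' := Complex.measurableEquivRealProd.measurable hS
  have hκm : Measurable fun w : ℂ => ker w := by
    unfold ker
    exact measurable_norm.ennreal_ofReal.inv
  set u : ℂ → ENNReal := fun z => ∫⁻ w in S', ker (w - z) with hu_def
  -- a.e. bounds on the potential
  have haeC : ∀ᵐ z : ℂ, ENNReal.ofReal (m * π) ≤ u z ∧ u z ≤ ENNReal.ofReal (M * π) := by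
    have h0 : ∀ᵐ z : ℂ, (∀ᵐ θ ∂(volume.restrict (Set.Ioo 0 π)),
        volume {r : ℝ | ((Complex.measurableEquivRealProd z).1 + r * Real.cos θ,
          (Complex.measurableEquivRealProd z).2 + r * Real.sin θ) ∈ S}
          ∈ Set.Icc (ENNReal.ofReal m) (ENNReal.ofReal M)) :=
      Complex.volume_preserving_equiv_real_prod.quasiMeasurePreserving.tendsto_ae.eventually hae
    filter_upwards [h0] with z hz
    have hset : ∀ θ : ℝ, {r : ℝ | ((Complex.measurableEquivRealProd z).1 + r * Real.cos θ,
          (Complex.measurableEquivRealProd z).2 + r * Real.sin θ) ∈ S}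
        = {r : ℝ | z + (r:ℂ) * Complex.exp ((θ:ℂ) * Complex.I) ∈ S'} := by
      intro θ; ext r
      simp only [Set.mem_setOf_eq, hS'_def, Set.mem_preimage,
        Complex.measurableEquivRealProd_apply]
      have : ((z + (r:ℂ) * Complex.exp ((θ:ℂ) * Complex.I)).re,
          (z + (r:ℂ) * Complex.exp ((θ:ℂ) * Complex.I)).im)
          = (z.re + r * Real.cos θ, z.im + r * Real.sin θ) := by
        simp [Complex.add_re, Complex.add_im, Complex.exp_ofReal_mul_I_re,
          Complex.exp_ofReal_mul_I_im, Complex.mul_re, Complex.mul_im]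
      rw [this]
    have hz' : ∀ᵐ (θ : ℝ) ∂(volume.restrict (Set.Ioo 0 π)),
        volume {r : ℝ | z + (r:ℂ) * Complex.exp ((θ:ℂ) * Complex.I) ∈ S'}
          ∈ Set.Icc (ENNReal.ofReal m) (ENNReal.ofReal M) := by
      filter_upwards [hz] with θ hθ
      rw [← hset θ]; exact hθ
    have hkey : u z = ∫⁻ θ in Ioo 0 π,
        volume {r : ℝ | z + (r:ℂ) * Complex.exp ((θ:ℂ) * Complex.I) ∈ S'} :=
      my_key S' hS' z
    constructor
    · rw [hkey]
      calc ENNReal.ofReal (m * π)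
          = ENNReal.ofReal m * volume (Set.Ioo (0:ℝ) π) := by
            rw [Real.volume_Ioo, sub_zero, ← ENNReal.ofReal_mul hm.le]
        _ = ∫⁻ _ in Set.Ioo (0:ℝ) π, ENNReal.ofReal m := by
            rw [setLIntegral_const]
        _ ≤ _ := lintegral_mono_ae (by filter_upwards [hz'] with θ hθ using hθ.1)
    · rw [hkey]
      calc ∫⁻ θ in Ioo 0 π,
            volume {r : ℝ | z + (r:ℂ) * Complex.exp ((θ:ℂ) * Complex.I) ∈ S'}
          ≤ ∫⁻ _ in Set.Ioo (0:ℝ) π, ENNReal.ofReal M :=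
            lintegral_mono_ae (by filter_upwards [hz'] with θ hθ using hθ.2)
        _ = ENNReal.ofReal M * volume (Set.Ioo (0:ℝ) π) := by
            rw [setLIntegral_const]
        _ = ENNReal.ofReal (M * π) := by
            rw [Real.volume_Ioo, sub_zero, ← ENNReal.ofReal_mul hM.le]
  -- pick a good center
  obtain ⟨z₀, hz₀⟩ := haeC.exists
  have hκm0 : Measurable fun w : ℂ => ker (w - z₀) := hκm.comp (measurable_id.sub_const z₀)
  set ν : Measure ℂ := volume.withDensity (S'.indicator (fun w => ker (w - z₀))) with hν_def
  have hνA : ∀ A : Set ℂ, MeasurableSet A → ν A = ∫⁻ w in A ∩ S', ker (w - z₀) := by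
    intro A hA
    rw [hν_def, withDensity_apply _ hA, setLIntegral_indicator hS', Set.inter_comm]
  have hν_univ : ν univ = u z₀ := by
    rw [hνA univ MeasurableSet.univ, Set.univ_inter]
  have hu_up : u z₀ ≤ ENNReal.ofReal (M * π) := hz₀.2
  have hν_fin : ν univ ≠ ⊤ := by
    rw [hν_univ]; exact (hu_up.trans_lt ENNReal.ofReal_lt_top).ne
  -- upper mass bound
  have hUpper : ∀ ρ : ℝ, 0 < ρ →
      volume (S' ∩ Metric.closedBall z₀ ρ) ≤ ENNReal.ofReal (M * π * ρ) := by
    intro ρ hρ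
    have h1 : (ENNReal.ofReal ρ)⁻¹ * volume (S' ∩ Metric.closedBall z₀ ρ)
        ≤ ν (Metric.closedBall z₀ ρ) := by
      rw [hνA _ measurableSet_closedBall]
      calc (ENNReal.ofReal ρ)⁻¹ * volume (S' ∩ Metric.closedBall z₀ ρ)
          = ∫⁻ _ in Metric.closedBall z₀ ρ ∩ S', (ENNReal.ofReal ρ)⁻¹ := by
            rw [setLIntegral_const, Set.inter_comm, mul_comm]
        _ ≤ ∫⁻ w in Metric.closedBall z₀ ρ ∩ S', ker (w - z₀) := by
            refine lintegral_mono_ae ?_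
            filter_upwards [ae_restrict_mem (measurableSet_closedBall.inter hS')] with w hw
            unfold ker
            exact ENNReal.inv_le_inv' (ENNReal.ofReal_le_ofReal
              (by rw [← dist_eq_norm]; exact hw.1))
    have h2 : ν (Metric.closedBall z₀ ρ) ≤ ENNReal.ofReal (M * π) :=
      le_trans (measure_mono (subset_univ _)) (le_of_eq_of_le hν_univ hu_up)
    calc volume (S' ∩ Metric.closedBall z₀ ρ)
        = ENNReal.ofReal ρ * ((ENNReal.ofReal ρ)⁻¹ * volume (S' ∩ Metric.closedBall z₀ ρ)) := by
          rw [← mul_assoc, ENNReal.mul_inv_cancel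
            ((ENNReal.ofReal_pos.2 hρ).ne') ENNReal.ofReal_ne_top, one_mul]
      _ ≤ ENNReal.ofReal ρ * ENNReal.ofReal (M * π) :=
          mul_le_mul_right (h1.trans h2) _
      _ = ENNReal.ofReal (M * π * ρ) := by
          rw [← ENNReal.ofReal_mul hρ.le]; congr 1; ring
  -- tail bound
  have htail : ∃ R₀ : ℕ, 1 ≤ R₀ ∧ ν (Metric.closedBall z₀ R₀)ᶜ ≤ ENNReal.ofReal (m * π / 4) := by
    have h1 : Filter.Tendsto (fun n : ℕ => ν (Metric.closedBall z₀ n)ᶜ) Filter.atTop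
        (nhds (ν (⋂ n : ℕ, (Metric.closedBall z₀ (n:ℝ))ᶜ))) := by
      apply tendsto_measure_iInter_atTop
      · exact fun n => measurableSet_closedBall.compl.nullMeasurableSet
      · intro a b hab
        exact compl_subset_compl.2 (Metric.closedBall_subset_closedBall (by exact_mod_cast hab))
      · exact ⟨0, ((measure_mono (subset_univ _)).trans_lt
          (lt_of_le_of_ne le_top hν_fin)).ne⟩
    have h2 : (⋂ n : ℕ, (Metric.closedBall z₀ (n:ℝ))ᶜ) = ∅ := by
      ext w
      simp only [mem_iInter, mem_compl_iff, Metric.mem_closedBall, not_le,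
        mem_empty_iff_false, iff_false, not_forall, not_lt]
      obtain ⟨n, hn⟩ := exists_nat_ge (dist w z₀)
      exact ⟨n, hn⟩
    rw [h2, measure_empty] at h1
    have h3 := (h1.eventually (gt_mem_nhds (ENNReal.ofReal_pos.2 (by positivity)
      : (0:ENNReal) < ENNReal.ofReal (m * π / 4)))).and (Filter.eventually_ge_atTop 1)
    obtain ⟨n, hn⟩ := h3.exists
    exact ⟨n, hn.2, hn.1.le⟩
  obtain ⟨R₀, hR₀1, hR₀⟩ := htail
  have hR₀pos : (0:ℝ) < R₀ := by exact_mod_cast hR₀1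
  have hGrow : ∀ R : ℝ, (R₀:ℝ) ≤ R →
      ENNReal.ofReal (m * π / 2) * volume (Metric.ball z₀ R)
        ≤ volume (S' ∩ Metric.closedBall z₀ (2*R))
          * (ENNReal.ofReal (3*R) * ENNReal.ofReal (2*π)) := by
    intro R hR
    have hRpos : (0:ℝ) < R := lt_of_lt_of_le hR₀pos hR
    have hinner : ∀ᵐ z ∂(volume.restrict (Metric.ball z₀ R)),
        ENNReal.ofReal (m * π / 2)
          ≤ ∫⁻ w in S' ∩ Metric.closedBall z₀ (2*R), ker (w - z) := by
      filter_upwards [ae_restrict_of_ae haeC, ae_restrict_mem measurableSet_ball] with z hz hzb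
      have hsplit : u z = (∫⁻ w in S' ∩ Metric.closedBall z₀ (2*R), ker (w - z))
          + ∫⁻ w in S' \ Metric.closedBall z₀ (2*R), ker (w - z) := by
        rw [hu_def]
        conv_lhs => rw [← Set.inter_union_diff S' (Metric.closedBall z₀ (2*R))]
        exact lintegral_union (hS'.diff measurableSet_closedBall)
          (Set.disjoint_left.2 fun x hx hx' => hx'.2 hx.2)
      have houter : ∫⁻ w in S' \ Metric.closedBall z₀ (2*R), ker (w - z)
          ≤ ENNReal.ofReal (m * π / 2) := by
        calc ∫⁻ w in S' \ Metric.closedBall z₀ (2*R), ker (w - z)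
            ≤ ∫⁻ w in S' \ Metric.closedBall z₀ (2*R), 2 * ker (w - z₀) := by
              refine lintegral_mono_ae ?_
              filter_upwards [ae_restrict_mem (hS'.diff measurableSet_closedBall)] with w hw
              have hd1 : 2*R < dist w z₀ := by
                by_contra hcon
                exact hw.2 (Metric.mem_closedBall.2 (not_lt.1 hcon))
              have hd2 : dist z z₀ < R := Metric.mem_ball.1 hzb
              have hd3 : dist w z₀ / 2 ≤ dist w z := by
                have := dist_triangle w z z₀
                linarith
              have h4 : ker (w - z) ≤ (ENNReal.ofReal (dist w z₀ / 2))⁻¹ := by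
                unfold ker
                rw [← dist_eq_norm]
                exact ENNReal.inv_le_inv' (ENNReal.ofReal_le_ofReal hd3)
              refine h4.trans (le_of_eq ?_)
              unfold ker
              rw [← dist_eq_norm, ENNReal.ofReal_div_of_pos two_pos, ENNReal.inv_div
                (Or.inl (by simp)) (Or.inl (by simp)), div_eq_mul_inv, ENNReal.ofReal_ofNat]
          _ = 2 * ∫⁻ w in S' \ Metric.closedBall z₀ (2*R), ker (w - z₀) :=
              lintegral_const_mul 2 hκm0
          _ ≤ 2 * ν (Metric.closedBall z₀ R₀)ᶜ := by
              gcongr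
              rw [hνA _ measurableSet_closedBall.compl]
              refine lintegral_mono_set ?_
              intro w hw
              refine ⟨?_, hw.1⟩
              intro hc
              apply hw.2
              refine Metric.closedBall_subset_closedBall ?_ hc
              linarith
          _ ≤ 2 * ENNReal.ofReal (m * π / 4) := by gcongr
          _ = ENNReal.ofReal (m * π / 2) := by
              rw [show (2:ENNReal) = ENNReal.ofReal 2 by simp,
                ← ENNReal.ofReal_mul (by norm_num)]
              congr 1; ring
      have hlow : ENNReal.ofReal (m * π) ≤ u z := hz.1
      have h5 : ENNReal.ofReal (m * π)
          ≤ (∫⁻ w in S' ∩ Metric.closedBall z₀ (2*R), ker (w - z))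
            + ENNReal.ofReal (m * π / 2) := by
        rw [hsplit] at hlow
        exact hlow.trans (add_le_add_right houter _)
      calc ENNReal.ofReal (m * π / 2)
          = ENNReal.ofReal (m * π) - ENNReal.ofReal (m * π / 2) := by
            rw [← ENNReal.ofReal_sub _ (by positivity)]; congr 1; ring
        _ ≤ _ := tsub_le_iff_right.2 h5
    calc ENNReal.ofReal (m * π / 2) * volume (Metric.ball z₀ R)
        = ∫⁻ _ in Metric.ball z₀ R, ENNReal.ofReal (m * π / 2) := by
          rw [setLIntegral_const]
      _ ≤ ∫⁻ z in Metric.ball z₀ R,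
            ∫⁻ w in S' ∩ Metric.closedBall z₀ (2*R), ker (w - z) :=
          lintegral_mono_ae hinner
      _ = ∫⁻ w in S' ∩ Metric.closedBall z₀ (2*R),
            ∫⁻ z in Metric.ball z₀ R, ker (w - z) := by
          exact lintegral_lintegral_swap
            ((hκm.comp ((measurable_snd.sub measurable_fst))).aemeasurable)
      _ ≤ ∫⁻ _ in S' ∩ Metric.closedBall z₀ (2*R),
            (ENNReal.ofReal (3*R) * ENNReal.ofReal (2*π)) := by
          refine lintegral_mono_ae ?_
          filter_upwards [ae_restrict_mem (hS'.inter measurableSet_closedBall)] with w hw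
          have hsub : Metric.ball z₀ R ⊆ Metric.ball w (3*R) := by
            intro y hy
            have h6 : dist y z₀ < R := Metric.mem_ball.1 hy
            have h7 : dist w z₀ ≤ 2*R := Metric.mem_closedBall.1 hw.2
            have := dist_triangle y z₀ w
            rw [Metric.mem_ball]
            rw [dist_comm w z₀] at h7
            linarith
          calc ∫⁻ z in Metric.ball z₀ R, ker (w - z)
              ≤ ∫⁻ z in Metric.ball w (3*R), ker (w - z) := lintegral_mono_set hsub
            _ = ∫⁻ z in Metric.ball w (3*R), ker (z - w) :=
                lintegral_congr fun z => by unfold ker; rw [norm_sub_rev]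
            _ ≤ ENNReal.ofReal (3*R) * ENNReal.ofReal (2*π) := my_ker_ball w (3*R)
      _ = volume (S' ∩ Metric.closedBall z₀ (2*R))
            * (ENNReal.ofReal (3*R) * ENNReal.ofReal (2*π)) := by
          rw [setLIntegral_const, mul_comm]
  have hMass : ∀ ρ : ℝ, 2*(R₀:ℝ) ≤ ρ →
      ENNReal.ofReal (m * ρ / 50) ≤ volume (S' ∩ Metric.closedBall z₀ ρ) := by
    intro ρ hρ
    have hRpos : (0:ℝ) < ρ/2 := by linarith
    have hρpos : (0:ℝ) < ρ := by linarith
    have h := hGrow (ρ/2) (by linarith)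
    rw [show 2*(ρ/2) = ρ by ring] at h
    have hpiE : (NNReal.pi : ENNReal) = ENNReal.ofReal π := by
      rw [ENNReal.coe_nnreal_eq, NNReal.coe_real_pi]
    have hL : ENNReal.ofReal (m*π/2 * ((ρ/2)^2*π))
        = ENNReal.ofReal (m*π/2) * volume (Metric.ball z₀ (ρ/2)) := by
      rw [Complex.volume_ball, hpiE,
        ENNReal.ofReal_mul (show (0:ℝ) ≤ m*π/2 by positivity),
        ENNReal.ofReal_mul (show (0:ℝ) ≤ (ρ/2)^2 by positivity),
        ENNReal.ofReal_pow hRpos.le]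
    have hRp : ENNReal.ofReal (3*(ρ/2)*(2*π))
        = ENNReal.ofReal (3*(ρ/2)) * ENNReal.ofReal (2*π) :=
      ENNReal.ofReal_mul (by positivity)
    have h' : ENNReal.ofReal (m*π/2 * ((ρ/2)^2*π))
        ≤ volume (S' ∩ Metric.closedBall z₀ ρ) * ENNReal.ofReal (3*(ρ/2)*(2*π)) := by
      rw [hL, hRp]; exact h
    have h2 : ENNReal.ofReal (m*π/2 * ((ρ/2)^2*π)) / ENNReal.ofReal (3*(ρ/2)*(2*π))
        ≤ volume (S' ∩ Metric.closedBall z₀ ρ) := by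
      refine (ENNReal.div_le_iff_le_mul (Or.inl ?_) (Or.inl ENNReal.ofReal_ne_top)).2 h'
      exact (ENNReal.ofReal_pos.2 (by positivity)).ne'
    refine le_trans ?_ h2
    rw [← ENNReal.ofReal_div_of_pos (by positivity)]
    apply ENNReal.ofReal_le_ofReal
    rw [le_div_iff₀ (by positivity)]
    have hh1 : 0 ≤ m * ρ^2 * π * (π - 3) := by
      have h3 : (0:ℝ) ≤ π - 3 := by linarith [Real.pi_gt_three]
      have h4 : (0:ℝ) ≤ m * ρ^2 * π := by positivity
      exact mul_nonneg h4 h3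
    have hh2 : 0 ≤ m * ρ^2 * π := by positivity
    nlinarith [hh1, hh2]
  -- the annuli
  set Λ : ℝ := 200 * (M*π + 1) / m with hΛ_def
  have hΛ1 : (1:ℝ) ≤ Λ := by
    rw [hΛ_def, le_div_iff₀ hm]
    nlinarith [Real.pi_gt_three]
  set ρs : ℕ → ℝ := fun j => (2*(R₀:ℝ)) * Λ ^ j with hρs_def
  have hρs_ge : ∀ j, 2*(R₀:ℝ) ≤ ρs j := by
    intro j
    have h1 : (1:ℝ) ≤ Λ ^ j := one_le_pow₀ hΛ1
    simp only [hρs_def]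
    nlinarith [hR₀pos]
  have hρs_pos : ∀ j, 0 < ρs j := fun j => lt_of_lt_of_le (by linarith) (hρs_ge j)
  have hρs_succ : ∀ j, ρs (j+1) = Λ * ρs j := by
    intro j; rw [hρs_def]; simp only []; rw [pow_succ]; ring
  have hρs_mono : Monotone ρs := by
    apply monotone_nat_of_le_succ
    intro j; rw [hρs_succ j]; nlinarith [hρs_pos j, hΛ1]
  set Ann : ℕ → Set ℂ :=
    fun j => Metric.closedBall z₀ (ρs (j+1)) \ Metric.closedBall z₀ (ρs j) with hAnn_def
  have hAnnMeas : ∀ j, MeasurableSet (Ann j) :=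
    fun j => measurableSet_closedBall.diff measurableSet_closedBall
  have hann : ∀ j : ℕ, ENNReal.ofReal (m/100) ≤ ν (Ann j) := by
    intro j
    have hνj : ν (Ann j) = ∫⁻ w in Ann j ∩ S', ker (w - z₀) := hνA _ (hAnnMeas j)
    have hker : ∀ᵐ w ∂(volume.restrict (Ann j ∩ S')),
        (ENNReal.ofReal (ρs (j+1)))⁻¹ ≤ ker (w - z₀) := by
      filter_upwards [ae_restrict_mem ((hAnnMeas j).inter hS')] with w hw
      unfold ker
      rw [← dist_eq_norm]
      exact ENNReal.inv_le_inv' (ENNReal.ofReal_le_ofReal (Metric.mem_closedBall.1 hw.1.1))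
    have h8 : (ENNReal.ofReal (ρs (j+1)))⁻¹ * volume (Ann j ∩ S') ≤ ν (Ann j) := by
      calc (ENNReal.ofReal (ρs (j+1)))⁻¹ * volume (Ann j ∩ S')
          = ∫⁻ _ in Ann j ∩ S', (ENNReal.ofReal (ρs (j+1)))⁻¹ :=
            (setLIntegral_const _ _).symm
        _ ≤ ∫⁻ w in Ann j ∩ S', ker (w - z₀) := lintegral_mono_ae hker
        _ = ν (Ann j) := hνj.symm
    have hsetid : Ann j ∩ S' = (S' ∩ Metric.closedBall z₀ (ρs (j+1)))
        \ (S' ∩ Metric.closedBall z₀ (ρs j)) := by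
      rw [hAnn_def]; ext w
      simp only [mem_diff, mem_inter_iff]; tauto
    have hfin : volume (S' ∩ Metric.closedBall z₀ (ρs j)) ≠ ⊤ :=
      ((measure_mono inter_subset_right).trans_lt measure_closedBall_lt_top).ne
    have hvol : volume (Ann j ∩ S')
        = volume (S' ∩ Metric.closedBall z₀ (ρs (j+1)))
          - volume (S' ∩ Metric.closedBall z₀ (ρs j)) := by
      rw [hsetid]
      exact measure_diff
        (inter_subset_inter_right _
          (Metric.closedBall_subset_closedBall (hρs_mono (Nat.le_succ j))))
        (hS'.inter measurableSet_closedBall).nullMeasurableSet hfin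
    have hvol_ge : ENNReal.ofReal (m * ρs (j+1) / 50 - M * π * ρs j)
        ≤ volume (Ann j ∩ S') := by
      rw [hvol, ENNReal.ofReal_sub _ (by positivity)]
      exact tsub_le_tsub (hMass _ (hρs_ge (j+1))) (hUpper _ (hρs_pos j))
    calc ENNReal.ofReal (m/100)
        ≤ (ENNReal.ofReal (ρs (j+1)))⁻¹
            * ENNReal.ofReal (m * ρs (j+1) / 50 - M * π * ρs j) := by
          rw [mul_comm, ← div_eq_mul_inv, ← ENNReal.ofReal_div_of_pos (hρs_pos (j+1))]
          apply ENNReal.ofReal_le_ofReal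
          rw [le_div_iff₀ (hρs_pos (j+1))]
          rw [hρs_succ j]
          have hρj := hρs_pos j
          have hΛval : m * Λ = 200 * (M*π + 1) := by
            rw [hΛ_def]; field_simp
          have h9 : m * Λ * ρs j = 200*(M*π+1) * ρs j := by rw [hΛval]
          nlinarith [h9, mul_nonneg (mul_nonneg hM.le hpi.le) hρj.le, hρj.le]
      _ ≤ (ENNReal.ofReal (ρs (j+1)))⁻¹ * volume (Ann j ∩ S') :=
          mul_le_mul_right hvol_ge _
      _ ≤ ν (Ann j) := h8
  have hdisjAnn : ∀ i j : ℕ, i < j → Disjoint (Ann i) (Ann j) := by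
    intro i j hij
    refine Set.disjoint_left.2 fun x hxi hxj => ?_
    exact hxj.2 (Metric.closedBall_subset_closedBall (hρs_mono hij) hxi.1)
  obtain ⟨N, hN⟩ := exists_nat_gt (M * π / (m/100))
  have hsum : (N : ENNReal) * ENNReal.ofReal (m/100) ≤ ν univ := by
    calc (N:ENNReal) * ENNReal.ofReal (m/100)
        = ∑ _j ∈ Finset.range N, ENNReal.ofReal (m/100) := by
          rw [Finset.sum_const, Finset.card_range, nsmul_eq_mul]
      _ ≤ ∑ j ∈ Finset.range N, ν (Ann j) := Finset.sum_le_sum fun j _ => hann j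
      _ = ν (⋃ j ∈ Finset.range N, Ann j) := by
          refine (measure_biUnion_finset ?_ fun j _ => hAnnMeas j).symm
          intro i _ j _ hij
          rcases lt_or_gt_of_ne hij with h | h
          · exact hdisjAnn i j h
          · exact (hdisjAnn j i h).symm
      _ ≤ ν univ := measure_mono (subset_univ _)
  have hcontr : (N:ENNReal) * ENNReal.ofReal (m/100) ≤ ENNReal.ofReal (M*π) :=
    hsum.trans (le_of_eq_of_le hν_univ hu_up)
  rw [← ENNReal.ofReal_natCast, ← ENNReal.ofReal_mul (by positivity)] at hcontr
  have hfin2 := (ENNReal.ofReal_le_ofReal_iff (by positivity)).1 hcontr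
  rw [div_lt_iff₀ (by positivity : (0:ℝ) < m/100)] at hN
  linarith
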